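/- For every positive integer n, the sum over divisors d of n of μ(n/d)·(n/d)·φ(d) equals μ(n), where μ is the Möbius function and φ is Euler's totient function. -/

import Mathlib

open Finset

open ArithmeticFunction ArithmeticFunction.zeta ArithmeticFunction.Moebius in
private def Phi : ArithmeticFunction ℕ := ⟨Nat.totient, Nat.totient_zero⟩

open ArithmeticFunction ArithmeticFunction.zeta ArithmeticFunction.Moebius in
private lemma zeta_mul_Phi : (ζ * Phi : ArithmeticFunction ℕ) = ArithmeticFunction.id := by
  ext n
  rw [zeta_mul_apply]
  simp [Phi, Nat.sum_totient]

open ArithmeticFunction ArithmeticFunction.zeta ArithmeticFunction.Moebius in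
private lemma Phi_eq : ((Phi : ArithmeticFunction ℤ)) = (μ : ArithmeticFunction ℤ) * (ArithmeticFunction.id : ArithmeticFunction ℕ) := by
  have h := congrArg (fun f : ArithmeticFunction ℕ => (μ : ArithmeticFunction ℤ) * (f : ArithmeticFunction ℤ)) zeta_mul_Phi
  simpa [natCoe_mul, ← mul_assoc, moebius_mul_coe_zeta] using h

open ArithmeticFunction ArithmeticFunction.zeta ArithmeticFunction.Moebius in
private lemma key : ((pmul (μ : ArithmeticFunction ℤ) (ArithmeticFunction.id : ArithmeticFunction ℕ)) * (ArithmeticFunction.id : ArithmeticFunction ℕ) : ArithmeticFunction ℤ) = 1 := by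
  ext n
  rcases eq_or_ne n 0 with rfl | hn
  · simp
  rw [mul_apply]
  have h1 : ∀ p ∈ n.divisorsAntidiagonal,
      (pmul (μ : ArithmeticFunction ℤ) (ArithmeticFunction.id : ArithmeticFunction ℕ)) p.1 *
        ((ArithmeticFunction.id : ArithmeticFunction ℕ) : ArithmeticFunction ℤ) p.2
        = μ p.1 * n := by
    intro p hp
    rw [Nat.mem_divisorsAntidiagonal] at hp
    simp only [pmul_apply, intCoe_apply, natCoe_apply, ArithmeticFunction.id_apply]
    rw [mul_assoc, ← Nat.cast_mul, hp.1]
  rw [Finset.sum_congr rfl h1, ← Finset.sum_mul]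
  have h2 : ∑ p ∈ n.divisorsAntidiagonal, (μ p.1 : ℤ) = ∑ d ∈ n.divisors, (μ d : ℤ) := by
    apply Nat.sum_divisorsAntidiagonal (fun a b => (μ a : ℤ))
  rw [h2]
  have h3 : ∑ d ∈ n.divisors, (μ d : ℤ) = ((μ * ζ : ArithmeticFunction ℤ)) n := by
    rw [coe_mul_zeta_apply]
  rw [h3, moebius_mul_coe_zeta]
  rcases eq_or_ne n 1 with rfl | h
  · simp
  · simp [h, hn]

theorem moebius_totient_convolution (n : ℕ) (hn : 0 < n) :
    ∑ d ∈ n.divisors,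
        (ArithmeticFunction.moebius (n / d)) * ((n / d : ℕ) : ℤ) * (Nat.totient d : ℤ)
      = ArithmeticFunction.moebius n := by
  open ArithmeticFunction ArithmeticFunction.zeta ArithmeticFunction.Moebius in
  have hfun : ((pmul (μ : ArithmeticFunction ℤ) (ArithmeticFunction.id : ArithmeticFunction ℕ)) * (Phi : ArithmeticFunction ℤ)) = (μ : ArithmeticFunction ℤ) := by
    rw [Phi_eq, mul_comm (μ : ArithmeticFunction ℤ) _, ← mul_assoc, key, one_mul]
  open ArithmeticFunction ArithmeticFunction.zeta ArithmeticFunction.Moebius in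
  have this := DFunLike.congr_fun hfun n
  rw [← this, ArithmeticFunction.mul_apply]
  rw [← Nat.sum_divisorsAntidiagonal' (f := fun a b =>
    (ArithmeticFunction.moebius a) * ((a : ℕ) : ℤ) * (Nat.totient b : ℤ))]
  apply Finset.sum_congr rfl
  intro p hp
  simp [ArithmeticFunction.pmul_apply, Phi, mul_assoc]
  left; left; rfl
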